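/- Let B ⊆ ℝ, and let g : Bⁿ → ℝ satisfy, for each i, that changing only the i-th coordinate changes g by at most cᵢ ≥ 0 (uniformly over all other coordinates). If U = (U₁,…,Uₙ) is a vector of independent B-valued random variables, then Var(g(U)) ≤ (1/4)·∑ᵢ cᵢ². -/

import Mathlib

open MeasureTheory


lemma popoviciu (μ : Measure ℝ) [IsProbabilityMeasure μ] (B : Set ℝ) (hB : μ Bᶜ = 0)
    (f : ℝ → ℝ) (hf : Measurable f) (c : ℝ) (hc : 0 ≤ c)
    (hbd : ∀ x ∈ B, ∀ y ∈ B, |f x - f y| ≤ c) :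
    (∫ x, f x ^ 2 ∂μ) - (∫ x, f x ∂μ) ^ 2 ≤ c ^ 2 / 4 := by
  have hBne : B.Nonempty := by
    by_contra h
    rw [Set.not_nonempty_iff_eq_empty] at h
    simp [h] at hB
  obtain ⟨b₀, hb₀⟩ := hBne
  set M : ℝ := sSup (f '' B) with hM
  set m : ℝ := sInf (f '' B) with hm
  have hbdd : BddAbove (f '' B) := by
    refine ⟨f b₀ + c, ?_⟩
    rintro _ ⟨x, hx, rfl⟩
    have := hbd x hx b₀ hb₀
    rw [abs_le] at this; linarith [this.2]
  have hbdd' : BddBelow (f '' B) := by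
    refine ⟨f b₀ - c, ?_⟩
    rintro _ ⟨x, hx, rfl⟩
    have := hbd x hx b₀ hb₀
    rw [abs_le] at this; linarith [this.1]
  have hne : (f '' B).Nonempty := ⟨f b₀, ⟨b₀, hb₀, rfl⟩⟩
  have hMm : M - m ≤ c := by
    have : M ≤ m + c := by
      apply csSup_le hne
      rintro _ ⟨x, hx, rfl⟩
      have hm' : m ≤ f x := csInf_le hbdd' ⟨x, hx, rfl⟩
      have : f x - c ≤ m := by
        apply le_csInf hne
        rintro _ ⟨y, hy, rfl⟩
        have := hbd x hx y hy
        rw [abs_le] at this; linarith [this.2]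
      linarith
    linarith
  set a : ℝ := (M + m) / 2 with ha
  have key : ∀ x ∈ B, (f x - a) ^ 2 ≤ c ^ 2 / 4 := by
    intro x hx
    have h1 : f x ≤ M := le_csSup hbdd ⟨x, hx, rfl⟩
    have h2 : m ≤ f x := csInf_le hbdd' ⟨x, hx, rfl⟩
    have : |f x - a| ≤ c / 2 := by
      refine abs_le.2 ⟨?_, ?_⟩ <;> simp only [ha] <;> nlinarith
    calc (f x - a) ^ 2 = |f x - a| ^ 2 := (sq_abs _).symm
    _ ≤ (c / 2) ^ 2 := by nlinarith [abs_nonneg (f x - a)]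
    _ = c ^ 2 / 4 := by ring
  have haeB : ∀ᵐ x ∂μ, x ∈ B := by
    rw [ae_iff]
    exact hB
  have hbound : ∀ x ∈ B, |f x| ≤ |a| + c / 2 := by
    intro x hx
    have h1 : f x ≤ M := le_csSup hbdd ⟨x, hx, rfl⟩
    have h2 : m ≤ f x := csInf_le hbdd' ⟨x, hx, rfl⟩
    rw [abs_le]
    cases abs_cases a with
    | inl h => constructor <;> nlinarith [h.1]
    | inr h => constructor <;> nlinarith [h.1]
  have hfint : Integrable f μ := by
    refine Integrable.mono' (integrable_const (|a| + c / 2)) hf.aestronglyMeasurable ?_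
    filter_upwards [haeB] with x hx using hbound x hx
  have hf2int : Integrable (fun x => f x ^ 2) μ := by
    refine Integrable.mono' (integrable_const ((|a| + c / 2) ^ 2)) (hf.pow_const 2).aestronglyMeasurable ?_
    filter_upwards [haeB] with x hx
    rw [Real.norm_eq_abs, abs_of_nonneg (sq_nonneg (f x))]
    calc f x ^ 2 = |f x| ^ 2 := (sq_abs _).symm
    _ ≤ (|a| + c / 2) ^ 2 := by nlinarith [hbound x hx, abs_nonneg (f x), abs_nonneg a]
  have hfa2int : Integrable (fun x => (f x - a) ^ 2) μ := by
    have : (fun x => (f x - a) ^ 2) = fun x => f x ^ 2 - 2 * a * f x + a ^ 2 := by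
      funext x; ring
    rw [this]
    exact ((hf2int.sub (hfint.const_mul (2 * a))).add (integrable_const _))
  have hexp : (∫ x, (f x - a) ^ 2 ∂μ) = (∫ x, f x ^ 2 ∂μ) - 2 * a * (∫ x, f x ∂μ) + a ^ 2 := by
    have : (fun x => (f x - a) ^ 2) = fun x => f x ^ 2 - 2 * a * f x + a ^ 2 := by
      funext x; ring
    rw [this]
    have h1 : (∫ x, (f x ^ 2 - 2 * a * f x + a ^ 2) ∂μ)
        = (∫ x, (f x ^ 2 - 2 * a * f x) ∂μ) + ∫ _, a ^ 2 ∂μ :=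
      integral_add (hf2int.sub (hfint.const_mul (2 * a))) (integrable_const _)
    have h2 : (∫ x, (f x ^ 2 - 2 * a * f x) ∂μ)
        = (∫ x, f x ^ 2 ∂μ) - ∫ x, 2 * a * f x ∂μ :=
      integral_sub hf2int (hfint.const_mul (2 * a))
    rw [h1, h2, integral_const_mul, integral_const]
    simp
  have hle : (∫ x, (f x - a) ^ 2 ∂μ) ≤ c ^ 2 / 4 := by
    calc (∫ x, (f x - a) ^ 2 ∂μ) ≤ ∫ _, c ^ 2 / 4 ∂μ := by
          refine integral_mono_ae hfa2int (integrable_const _) ?_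
          filter_upwards [haeB] with x hx using key x hx
    _ = c ^ 2 / 4 := by simp
  nlinarith [sq_nonneg ((∫ x, f x ∂μ) - a), hexp, hle]


lemma update_insertNth_succAbove {n : ℕ} (i : Fin (n + 1)) (t : ℝ) (y : Fin n → ℝ)
    (j : Fin n) (u' : ℝ) :
    Function.update (Fin.insertNth i t y) (i.succAbove j) u'
      = Fin.insertNth (α := fun _ => ℝ) i t (Function.update y j u') := by
  funext k
  refine Fin.succAboveCases i ?_ ?_ k
  · rw [Function.update_of_ne (Fin.succAbove_ne i j).symm]
    simp
  · intro k'
    simp [Function.update_apply, Fin.succAbove_right_inj]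

lemma telescope {n : ℕ} {B : Set ℝ} {g : (Fin n → ℝ) → ℝ} {c : Fin n → ℝ}
    (hdiff : ∀ i : Fin n, ∀ u : Fin n → ℝ, (∀ j, u j ∈ B) → ∀ u' ∈ B,
        |g u - g (Function.update u i u')| ≤ c i)
    (s : Finset (Fin n)) :
    ∀ u v : Fin n → ℝ, (∀ j, u j ∈ B) → (∀ j, v j ∈ B) →
      (∀ j ∉ s, u j = v j) → |g u - g v| ≤ ∑ i ∈ s, c i := by
  induction s using Finset.induction with
  | empty =>
    intro u v hu hv heq
    have : u = v := funext fun j => heq j (Finset.notMem_empty j)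
    simp [this]
  | insert i s hi ih =>
    intro u v hu hv heq
    set u' := Function.update u i (v i) with hu'def
    have hu' : ∀ j, u' j ∈ B := by
      intro j
      rw [hu'def, Function.update_apply]
      split <;> [exact hv i; exact hu j]
    have h1 : |g u - g u'| ≤ c i := hdiff i u hu (v i) (hv i)
    have h2 : |g u' - g v| ≤ ∑ j ∈ s, c j := by
      refine ih u' v hu' hv ?_
      intro j hj
      by_cases h : j = i
      · subst h; simp [hu'def]
      · rw [hu'def, Function.update_of_ne h]
        exact heq j (by simp [hj, h])
    calc |g u - g v| ≤ |g u - g u'| + |g u' - g v| := abs_sub_le _ _ _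
    _ ≤ c i + ∑ j ∈ s, c j := add_le_add h1 h2
    _ = ∑ j ∈ insert i s, c j := (Finset.sum_insert hi).symm

lemma bdv_aux : ∀ (n : ℕ) (B : Set ℝ) (g : (Fin n → ℝ) → ℝ) (c : Fin n → ℝ),
    Measurable g → (∀ i, 0 ≤ c i) →
    (∀ i : Fin n, ∀ u : Fin n → ℝ, (∀ j, u j ∈ B) → ∀ u' ∈ B,
        |g u - g (Function.update u i u')| ≤ c i) →
    ∀ (μ : Fin n → Measure ℝ), (∀ i, IsProbabilityMeasure (μ i)) → (∀ i, μ i Bᶜ = 0) →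
    (∫ u, (g u) ^ 2 ∂(Measure.pi μ)) - (∫ u, g u ∂(Measure.pi μ)) ^ 2 ≤
      (1 / 4) * ∑ i, (c i) ^ 2 := by
  intro n
  induction n with
  | zero =>
    intro B g c hg hc hdiff μ hprob hB
    haveI := hprob
    haveI : IsProbabilityMeasure (Measure.pi μ) := inferInstance
    rw [integral_unique, integral_unique]
    simp
  | succ n ih =>
    intro B g c hg hc hdiff μ hprob hB
    haveI := hprob
    -- B is nonempty
    have hBne : B.Nonempty := by
      by_contra h
      rw [Set.not_nonempty_iff_eq_empty] at h
      have := hB 0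
      simp [h] at this
    obtain ⟨b₀, hb₀⟩ := hBne
    set i : Fin (n + 1) := 0 with hidef
    set ν : Measure (Fin n → ℝ) := Measure.pi (fun j => μ (i.succAbove j)) with hνdef
    haveI : IsProbabilityMeasure ν := by rw [hνdef]; infer_instance
    haveI : IsProbabilityMeasure ((μ i).prod ν) := by infer_instance
    have mp := measurePreserving_piFinSuccAbove μ i
    set e := MeasurableEquiv.piFinSuccAbove (fun _ : Fin (n + 1) => ℝ) i with hedef
    have hesymm : ∀ z : ℝ × (Fin n → ℝ), e.symm z = Fin.insertNth i z.1 z.2 := by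
      intro z; rfl
    set G : ℝ × (Fin n → ℝ) → ℝ := fun z => g (Fin.insertNth i z.1 z.2) with hGdef
    have hGmeas : Measurable G := by
      have : G = g ∘ e.symm := by funext z; rw [hGdef]; simp [hesymm]
      rw [this]; exact hg.comp e.symm.measurable
    -- coordinates of insertNth in B
    have hcoords : ∀ (t : ℝ) (y : Fin n → ℝ), t ∈ B → (∀ j, y j ∈ B) →
        ∀ k, Fin.insertNth (α := fun _ => ℝ) i t y k ∈ B := by
      intro t y ht hy k
      refine Fin.succAboveCases i ?_ ?_ k
      · simpa using ht
      · intro j; simpa using hy j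
    -- global bound on g
    set K : ℝ := |g (fun _ => b₀)| + ∑ j, c j with hKdef
    have hK : ∀ u : Fin (n + 1) → ℝ, (∀ j, u j ∈ B) → |g u| ≤ K := by
      intro u hu
      have := telescope hdiff Finset.univ u (fun _ => b₀) hu (fun _ => hb₀)
        (fun j hj => absurd (Finset.mem_univ j) hj)
      calc |g u| ≤ |g u - g (fun _ => b₀)| + |g (fun _ => b₀)| := by
            have := abs_sub_abs_le_abs_sub (g u) (g (fun _ => b₀)); nlinarith [abs_nonneg (g u - g fun _ => b₀), abs_sub_le (g u) (g fun _ => b₀) 0]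
      _ ≤ K := by rw [hKdef]; linarith [this]
    have hK0 : 0 ≤ K := le_trans (abs_nonneg _) (hK _ (fun _ => hb₀))
    -- a.e. statements
    have haeB1 : ∀ᵐ z ∂((μ i).prod ν), z.1 ∈ B := by
      rw [ae_iff]
      refine measure_mono_null (fun z hz => ?_) (?_ : ((μ i).prod ν) (Bᶜ ×ˢ Set.univ) = 0)
      · exact ⟨hz, Set.mem_univ _⟩
      · rw [Measure.prod_prod, hB i, zero_mul]
    have haeB2 : ∀ᵐ z ∂((μ i).prod ν), ∀ j, z.2 j ∈ B := by
      rw [ae_iff]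
      refine measure_mono_null (fun z hz => ?_)
        (?_ : ((μ i).prod ν) (Set.univ ×ˢ {y : Fin n → ℝ | ∃ j, y j ∉ B}) = 0)
      · refine ⟨Set.mem_univ _, ?_⟩
        simp only [Set.mem_setOf_eq] at hz ⊢
        push_neg at hz
        exact hz
      · rw [Measure.prod_prod, measure_univ, one_mul]
        refine measure_mono_null (fun y hy => ?_) (?_ : ν (⋃ j, Function.eval j ⁻¹' Bᶜ) = 0)
        · obtain ⟨j, hj⟩ := hy
          exact Set.mem_iUnion.2 ⟨j, hj⟩
        · refine measure_iUnion_null fun j => ?_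
          exact Measure.pi_eval_preimage_null _ (hB _)
    have haeBμi : ∀ᵐ t ∂(μ i), t ∈ B := by rw [ae_iff]; exact hB i
    have haeBν : ∀ᵐ y ∂ν, ∀ j, y j ∈ B := by
      rw [ae_iff]
      refine measure_mono_null (fun y hy => ?_) (?_ : ν (⋃ j, Function.eval j ⁻¹' Bᶜ) = 0)
      · simp only [Set.mem_setOf_eq] at hy
        push_neg at hy
        obtain ⟨j, hj⟩ := hy
        exact Set.mem_iUnion.2 ⟨j, hj⟩
      · exact measure_iUnion_null fun j => Measure.pi_eval_preimage_null _ (hB _)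
    -- integrability of G and G^2
    have hGint : Integrable G ((μ i).prod ν) := by
      refine Integrable.mono' (integrable_const K) hGmeas.aestronglyMeasurable ?_
      filter_upwards [haeB1, haeB2] with z h1 h2
      exact hK _ (hcoords _ _ h1 h2)
    have hG2int : Integrable (fun z => G z ^ 2) ((μ i).prod ν) := by
      refine Integrable.mono' (integrable_const (K ^ 2)) ((hGmeas.pow_const 2).aestronglyMeasurable) ?_
      filter_upwards [haeB1, haeB2] with z h1 h2
      rw [Real.norm_eq_abs, abs_of_nonneg (sq_nonneg (G z))]
      calc G z ^ 2 = |G z| ^ 2 := (sq_abs _).symm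
      _ ≤ K ^ 2 := by nlinarith [hK _ (hcoords _ _ h1 h2), abs_nonneg (G z)]
    -- slice integrability
    have hslice : ∀ y : Fin n → ℝ, (∀ j, y j ∈ B) → Integrable (fun t => G (t, y)) (μ i) := by
      intro y hy
      refine Integrable.mono' (integrable_const K)
        ((hGmeas.comp (measurable_id.prodMk measurable_const)).aestronglyMeasurable) ?_
      filter_upwards [haeBμi] with t ht
      exact hK _ (hcoords _ _ ht hy)
    -- conditional expectation h
    set h : (Fin n → ℝ) → ℝ := fun y => ∫ t, G (t, y) ∂(μ i) with hhdef
    have hhmeas : Measurable h := by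
      have := hGmeas.stronglyMeasurable.integral_prod_left' (μ := μ i)
      exact this.measurable
    have hhK : ∀ y, (∀ j, y j ∈ B) → |h y| ≤ K := by
      intro y hy
      rw [hhdef]
      calc |∫ t, G (t, y) ∂(μ i)| ≤ K * ((μ i) Set.univ).toReal := by
            rw [← Real.norm_eq_abs]
            refine norm_integral_le_of_norm_le_const ?_
            filter_upwards [haeBμi] with t ht
            exact hK _ (hcoords _ _ ht hy)
      _ = K := by simp
    -- bounded differences for h
    have hhdiff : ∀ j : Fin n, ∀ y : Fin n → ℝ, (∀ k, y k ∈ B) → ∀ u' ∈ B,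
        |h y - h (Function.update y j u')| ≤ c (i.succAbove j) := by
      intro j y hy u' hu'
      have hy' : ∀ k, Function.update y j u' k ∈ B := by
        intro k
        rw [Function.update_apply]
        split <;> [exact hu'; exact hy k]
      rw [hhdef]
      simp only
      rw [← integral_sub (hslice y hy) (hslice _ hy')]
      calc |∫ t, (G (t, y) - G (t, Function.update y j u')) ∂(μ i)|
          ≤ c (i.succAbove j) * ((μ i) Set.univ).toReal := by
            rw [← Real.norm_eq_abs]
            refine norm_integral_le_of_norm_le_const ?_
            filter_upwards [haeBμi] with t ht
            rw [Real.norm_eq_abs, hGdef]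
            simp only
            rw [← update_insertNth_succAbove i t y j u']
            exact hdiff (i.succAbove j) _ (hcoords _ _ ht hy) u' hu'
      _ = c (i.succAbove j) := by simp
    -- apply induction hypothesis to h
    have hIH := ih B h (fun j => c (i.succAbove j)) hhmeas (fun j => hc _) hhdiff
      (fun j => μ (i.succAbove j)) (fun j => inferInstance) (fun j => hB _)
    -- transfer integrals from pi to prod
    have hI1 : (∫ u, g u ∂(Measure.pi μ)) = ∫ z, G z ∂((μ i).prod ν) := by
      rw [← (MeasurePreserving.symm e mp).integral_comp e.symm.measurableEmbedding g]
      rfl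
    have hI2 : (∫ u, g u ^ 2 ∂(Measure.pi μ)) = ∫ z, G z ^ 2 ∂((μ i).prod ν) := by
      rw [← (MeasurePreserving.symm e mp).integral_comp e.symm.measurableEmbedding
        (fun u => g u ^ 2)]
      rfl
    -- Fubini
    have hF1 : (∫ z, G z ∂((μ i).prod ν)) = ∫ y, h y ∂ν :=
      integral_prod_symm G hGint
    have hF2 : (∫ z, G z ^ 2 ∂((μ i).prod ν)) = ∫ y, (∫ t, G (t, y) ^ 2 ∂(μ i)) ∂ν :=
      integral_prod_symm _ hG2int
    -- integrability of the pieces over ν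
    have hH2int : Integrable (fun y => ∫ t, G (t, y) ^ 2 ∂(μ i)) ν :=
      hG2int.integral_prod_right
    have hh2int : Integrable (fun y => h y ^ 2) ν := by
      refine Integrable.mono' (integrable_const (K ^ 2)) ((hhmeas.pow_const 2).aestronglyMeasurable) ?_
      filter_upwards [haeBν] with y hy
      rw [Real.norm_eq_abs, abs_of_nonneg (sq_nonneg (h y))]
      calc h y ^ 2 = |h y| ^ 2 := (sq_abs _).symm
      _ ≤ K ^ 2 := by nlinarith [hhK y hy, abs_nonneg (h y)]
    -- conditional variance bound
    have hcond : (∫ y, (∫ t, G (t, y) ^ 2 ∂(μ i)) ∂ν) - (∫ y, h y ^ 2 ∂ν)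
        ≤ c i ^ 2 / 4 := by
      rw [← integral_sub hH2int hh2int]
      calc (∫ y, ((∫ t, G (t, y) ^ 2 ∂(μ i)) - h y ^ 2) ∂ν)
          ≤ ∫ _, c i ^ 2 / 4 ∂ν := by
            refine integral_mono_ae (hH2int.sub hh2int) (integrable_const _) ?_
            filter_upwards [haeBν] with y hy
            have := popoviciu (μ i) B (hB i) (fun t => G (t, y))
              (hGmeas.comp (measurable_id.prodMk measurable_const)) (c i) (hc i) ?_
            · exact this
            · intro t ht t' ht'
              have heq : g (Fin.insertNth i t' y) = g (Function.update (Fin.insertNth i t y) i t') := by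
                rw [Fin.update_insertNth]
              show |g (Fin.insertNth i t y) - g (Fin.insertNth i t' y)| ≤ c i
              rw [heq]
              exact hdiff i _ (hcoords _ _ ht hy) t' ht'
      _ = c i ^ 2 / 4 := by simp
    -- put it together
    rw [hI1, hI2, hF1, hF2]
    have hsum : ∑ k : Fin (n + 1), c k ^ 2 = c i ^ 2 + ∑ j : Fin n, c (i.succAbove j) ^ 2 :=
      Fin.sum_univ_succAbove (fun k => c k ^ 2) i
    rw [hsum]
    linarith [hIH, hcond]

/-- Bounded differences (McDiarmid-type) variance inequality, real case: if
changing the `i`-th coordinate of `g` changes its value by at most `cᵢ`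
(uniformly over `Bⁿ`), and `U` has independent `B`-valued coordinates with
laws `μ i`, then `Var(g(U)) ≤ (1/4) ∑ᵢ cᵢ²`. -/
theorem bounded_differences_variance
    (n : ℕ) (B : Set ℝ) (g : (Fin n → ℝ) → ℝ) (c : Fin n → ℝ)
    (hg : Measurable g)
    (hc : ∀ i, 0 ≤ c i)
    (hdiff : ∀ i : Fin n, ∀ u : Fin n → ℝ, (∀ j, u j ∈ B) → ∀ u' ∈ B,
        |g u - g (Function.update u i u')| ≤ c i)
    (μ : Fin n → Measure ℝ) [∀ i, IsProbabilityMeasure (μ i)]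
    (hB : ∀ i, μ i Bᶜ = 0) :
    (∫ u, (g u) ^ 2 ∂(Measure.pi μ)) - (∫ u, g u ∂(Measure.pi μ)) ^ 2 ≤
      (1 / 4) * ∑ i, (c i) ^ 2 :=
  bdv_aux n B g c hg hc hdiff μ (fun i => inferInstance) hB
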